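/- Let G be an (ℓ+1)-connected finite simple graph and let P, Q be longest paths with |V(P) ∩ V(Q)| = ℓ. Orient P and Q and let a_1 (resp. b_1) be the first vertex of V(P) ∩ V(Q) along P (resp. Q). If a_1 = b_1, then the initial segment of P before a_1 and the initial segment of Q before b_1 are both nonempty, i.e., a_1 is not a common endpoint of both P and Q. -/

import Mathlib

open SimpleGraph

/-- `p` is a longest path in `G`: it is a path and no path in `G` is longer. -/
def IsLongestPath {V : Type} (G : SimpleGraph V) {u v : V} (p : G.Walk u v) : Prop :=
  p.IsPath ∧ ∀ ⦃a b : V⦄ (q : G.Walk a b), q.IsPath → q.length ≤ p.length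

/-- `G` is `k`-connected: it has more than `k` vertices and deleting any set of
fewer than `k` vertices leaves a connected graph. -/
def KConnected {V : Type} [Fintype V] (G : SimpleGraph V) (k : ℕ) : Prop :=
  k < Fintype.card V ∧
    ∀ S : Finset V, S.card < k → (G.induce {x | x ∉ S}).Connected

lemma aux_indexOf_lt {V : Type} [DecidableEq V] {G : SimpleGraph V} {u v a z : V}
    {p : G.Walk u v} (hp : p.IsPath) (ha : a ∈ p.support)
    (hz : z ∈ (p.takeUntil a ha).support) (hza : z ≠ a) :
    p.support.idxOf z < p.support.idxOf a := by
  set s1 := (p.takeUntil a ha).support with hs1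
  have hne : s1 ≠ [] := Walk.support_ne_nil _
  have hlast : s1.getLast hne = a := by
    simp [hs1]
  have hsplit : s1.dropLast ++ [a] = s1 := by
    rw [← hlast]; exact List.dropLast_append_getLast hne
  have hnodup1 : s1.Nodup := (hp.takeUntil ha).support_nodup
  have hanot : a ∉ s1.dropLast := by
    rw [← hsplit] at hnodup1
    have := List.disjoint_of_nodup_append hnodup1
    intro h; exact this h (by simp)
  have hzdl : z ∈ s1.dropLast := by
    have : z ∈ s1.dropLast ++ [a] := by rw [hsplit]; exact hz
    rcases List.mem_append.1 this with h | h
    · exact h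
    · simp at h; exact absurd h hza
  have hsupp : p.support = s1 ++ (p.dropUntil a ha).support.tail := by
    conv_lhs => rw [← p.take_spec ha]
    rw [Walk.support_append]
  have h1 : p.support.idxOf z = s1.idxOf z := by
    rw [hsupp]
    exact List.idxOf_append_of_mem hz
  have h2 : p.support.idxOf a = s1.idxOf a := by
    rw [hsupp]
    exact List.idxOf_append_of_mem (by rw [← hsplit]; simp)
  have h3 : s1.idxOf z = s1.dropLast.idxOf z := by
    have := List.idxOf_append_of_mem (l₂ := [a]) hzdl
    rw [hsplit] at this; exact this
  have h4 : s1.idxOf a = s1.dropLast.length := by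
    have := List.idxOf_append_of_notMem (l₂ := [a]) hanot
    rw [hsplit] at this; simpa using this
  rw [h1, h2, h3, h4]
  exact List.idxOf_lt_length_iff.2 hzdl

lemma aux_exists_adj {V : Type} [Fintype V] [DecidableEq V] {G : SimpleGraph V} {l : ℕ}
    (hG : KConnected G (l + 1)) (T : Finset V) (hT : T.card = l) {a : V} (ha : a ∈ T) :
    ∃ t, G.Adj a t ∧ t ∉ T := by
  by_contra h
  push_neg at h
  set S := T.erase a with hS
  have hScard : S.card < l + 1 := by
    have h1 : S.card < T.card := hS ▸ Finset.card_erase_lt_of_mem ha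
    omega
  have hconn := hG.2 S hScard
  have haS : a ∉ S := Finset.notMem_erase a T
  obtain ⟨b, hb⟩ : ∃ b, b ∉ insert a S := by
    by_contra h'
    push_neg at h'
    have hsub : (Finset.univ : Finset V) ⊆ insert a S := fun x _ => h' x
    have := Finset.card_le_card hsub
    have hins := Finset.card_insert_le a S
    have := hG.1
    simp [Finset.card_univ] at *
    omega
  have hbS : b ∉ S := fun h'' => hb (Finset.mem_insert_of_mem h'')
  have hba : b ≠ a := fun h'' => hb (h'' ▸ Finset.mem_insert_self a S)
  obtain ⟨w⟩ := hconn.preconnected ⟨a, haS⟩ ⟨b, hbS⟩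
  cases w with
  | nil => exact hba rfl
  | cons hadj w' =>
    rename_i x
    have hGadj : G.Adj a x.1 := hadj
    have hxT : x.1 ∈ T := h _ hGadj
    have hxa : x.1 ≠ a := fun h'' => G.irrefl (h'' ▸ hGadj)
    exact x.2 (Finset.mem_erase.2 ⟨hxa, hxT⟩)

lemma aux_mem_support {V : Type} {G : SimpleGraph V} {u v t : V} {p : G.Walk u v}
    (hp : IsLongestPath G p) (h : G.Adj t u) : t ∈ p.support := by
  by_contra ht
  have hpath : (Walk.cons h p).IsPath := hp.1.cons ht
  have := hp.2 _ hpath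
  simp [Walk.length_cons] at this

lemma aux_helper {V : Type} [DecidableEq V] (G : SimpleGraph V) {u v c d a1 : V}
    (p : G.Walk u v) (q : G.Walk c d) (hp : IsLongestPath G p) (hq : q.IsPath)
    (haq : a1 ∈ q.support)
    (hfirst : ∀ z ∈ q.support, z ∈ p.support →
      q.support.idxOf a1 ≤ q.support.idxOf z)
    (hau : a1 = u) : a1 = c := by
  subst hau
  set q1 := q.takeUntil a1 haq with hq1def
  have hq1 : q1.IsPath := hq.takeUntil haq
  have hsupp : p.support = a1 :: p.support.tail := by
    rw [← Walk.support_eq_cons]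
  have hr : (q1.append p).IsPath := by
    rw [Walk.isPath_def, Walk.support_append]
    refine List.Nodup.append hq1.support_nodup ?_ ?_
    · have := hp.1.support_nodup
      rw [hsupp] at this
      exact this.of_cons
    · intro z hz1 hz2
      have hzq : z ∈ q.support := Walk.support_takeUntil_subset q haq hz1
      have hzp : z ∈ p.support := List.mem_of_mem_tail hz2
      have hza : z ≠ a1 := by
        intro h''
        have := hp.1.support_nodup
        rw [hsupp] at this
        exact this.notMem (h'' ▸ hz2)
      have h1 := hfirst z hzq hzp
      have h2 := aux_indexOf_lt hq haq hz1 hza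
      omega
  have hlen := hp.2 _ hr
  rw [Walk.length_append] at hlen
  have : q1.length = 0 := by omega
  exact (Walk.eq_of_length_eq_zero this).symm

theorem first_intersection_not_common_endpoint {V : Type} [Fintype V] [DecidableEq V]
    (G : SimpleGraph V) (l : ℕ) (hG : KConnected G (l + 1))
    {u v c d a1 : V} (p : G.Walk u v) (q : G.Walk c d)
    (hp : IsLongestPath G p) (hq : IsLongestPath G q)
    (hcard : (p.support.toFinset ∩ q.support.toFinset).card = l)
    (ha1 : a1 ∈ p.support ∧ a1 ∈ q.support)
    (hfirstP : ∀ z ∈ p.support, z ∈ q.support →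
      p.support.idxOf a1 ≤ p.support.idxOf z)
    (hfirstQ : ∀ z ∈ q.support, z ∈ p.support →
      q.support.idxOf a1 ≤ q.support.idxOf z) :
    a1 ≠ u ∧ a1 ≠ c := by
  have key : ¬(a1 = u ∧ a1 = c) := by
    rintro ⟨hau, hac⟩
    have haT : a1 ∈ p.support.toFinset ∩ q.support.toFinset := by
      simp [List.mem_toFinset, ha1.1, ha1.2]
    obtain ⟨t, hadj, htT⟩ := aux_exists_adj hG _ hcard haT
    have hsplit : t ∉ p.support ∨ t ∉ q.support := by
      by_contra h'
      push_neg at h'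
      exact htT (by simp [List.mem_toFinset, h'.1, h'.2])
    rcases hsplit with h' | h'
    · exact h' (aux_mem_support hp (hau ▸ hadj.symm))
    · exact h' (aux_mem_support hq (hac ▸ hadj.symm))
  have h1 : a1 = u → a1 = c := aux_helper G p q hp hq.1 ha1.2 hfirstQ
  have h2 : a1 = c → a1 = u := aux_helper G q p hq hp.1 ha1.1 hfirstP
  exact ⟨fun h => key ⟨h, h1 h⟩, fun h => key ⟨h2 h, h⟩⟩
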